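/- (Theorem 3.2, Euclidean case Q̄ = ℝ^n, so T*Q̄ = ℝ^n × ℝ^n with the canonical symplectic form.) Let X be a smooth vector field on ℝ^n × ℝ^n, let f: ℝ^n → ℝ be smooth and nowhere-vanishing, and let X_C be the Chaplygin-rescaled vector field. If X_C is symplectic, i.e. for every z and all u, v one has Ω(DX_C(z)[u], v) + Ω(u, DX_C(z)[v]) = 0 (the Lie derivative of Ω along X_C vanishes), then div(f^{n−1}X) = 0 identically; that is, X preserves the measure f(q)^{n−1} dq dp. -/

import Mathlib

noncomputable section

open Matrix

/-- Configuration vectors: points of `ℝⁿ`. -/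
abbrev Vec (n : ℕ) : Type := Fin n → ℝ

/-- Phase space `ℝⁿ × ℝⁿ`, points `z = (q, p)`. -/
abbrev Phase (n : ℕ) : Type := Vec n × Vec n

/-- Canonical symplectic form `Ω(u,v) = ⟨u_q, v_p⟩ − ⟨u_p, v_q⟩`. -/
def Omega {n : ℕ} (u v : Phase n) : ℝ := u.1 ⬝ᵥ v.2 - u.2 ⬝ᵥ v.1

/-- Liouville one-form `Θ_z(v) = ⟨p, v_q⟩` at `z = (q,p)`. -/
def Theta {n : ℕ} (z v : Phase n) : ℝ := z.2 ⬝ᵥ v.1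

/-- Fiber scaling `Ψ_f(q,p) = (q, f(q)·p)`. -/
def Psi {n : ℕ} (f : Vec n → ℝ) (z : Phase n) : Phase n := (z.1, f z.1 • z.2)

/-- `Ψ_{1/f}`, the inverse of `Ψ_f`. -/
def PsiInv {n : ℕ} (f : Vec n → ℝ) : Phase n → Phase n := Psi fun q => (f q)⁻¹

/-- The Chaplygin-rescaled vector field
`X_C(z) := DΨ_f(Ψ_{1/f}(z))[(1/f(q))·X(Ψ_{1/f}(z))]`. -/
def ChapRescale {n : ℕ} (f : Vec n → ℝ) (X : Phase n → Phase n) (z : Phase n) : Phase n :=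
  fderiv ℝ (Psi f) (PsiInv f z) ((f z.1)⁻¹ • X (PsiInv f z))

/-- The two-form `df ∧ Θ`. -/
def dfTheta {n : ℕ} (f : Vec n → ℝ) (z u v : Phase n) : ℝ :=
  fderiv ℝ f z.1 u.1 * (z.2 ⬝ᵥ v.1) - fderiv ℝ f z.1 v.1 * (z.2 ⬝ᵥ u.1)

/-- Divergence of a vector field: `div Y (z) = trace DY(z)`. -/
def divergence {n : ℕ} (Y : Phase n → Phase n) (z : Phase n) : ℝ :=
  LinearMap.trace ℝ (Phase n) (fderiv ℝ Y z).toLinearMap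

namespace ChapAux

open ContinuousLinearMap

lemma sum_single_smul {n : ℕ} (v : Vec n) :
    ∑ i, v i • (Pi.single i 1 : Vec n) = v := by
  have h : ∀ i, v i • (Pi.single i 1 : Vec n) = Pi.single i (v i) := by
    intro i; rw [← Pi.single_smul]; norm_num
  simp_rw [h]; exact Finset.univ_sum_single v

lemma clm_sum {n : ℕ} (l : Vec n →L[ℝ] ℝ) (v : Vec n) :
    ∑ i, v i * l (Pi.single i 1) = l v := by
  conv_rhs => rw [← sum_single_smul v]
  rw [map_sum]
  simp [smul_eq_mul]

lemma trace_eq_sum {n : ℕ} (L : Phase n →L[ℝ] Phase n) :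
    LinearMap.trace ℝ (Phase n) L.toLinearMap
      = ∑ i, (L ((Pi.single i 1 : Vec n), 0)).1 i
        + ∑ i, (L ((0 : Vec n), (Pi.single i 1 : Vec n))).2 i := by
  classical
  rw [LinearMap.trace_eq_matrix_trace ℝ ((Pi.basisFun ℝ (Fin n)).prod (Pi.basisFun ℝ (Fin n)))]
  rw [Matrix.trace, Fintype.sum_sum_type]
  congr 1 <;>
  · refine Finset.sum_congr rfl fun i _ => ?_
    simp [Matrix.diag, LinearMap.toMatrix_apply, Module.Basis.prod_apply, Module.Basis.prod_repr_inl,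
      Module.Basis.prod_repr_inr, Pi.basisFun_apply, Pi.basisFun_repr]

lemma hasFDerivAt_Psi {n : ℕ} {f : Vec n → ℝ} (hf : ContDiff ℝ (⊤ : ℕ∞) f) (m : Phase n) :
    HasFDerivAt (Psi f)
      ((fst ℝ (Vec n) (Vec n)).prod
        (f m.1 • snd ℝ (Vec n) (Vec n)
          + ((fderiv ℝ f m.1).comp (fst ℝ (Vec n) (Vec n))).smulRight m.2)) m := by
  have h1 : HasFDerivAt (fun z : Phase n => f z.1)
      ((fderiv ℝ f m.1).comp (fst ℝ (Vec n) (Vec n))) m :=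
    ((hf.differentiable (by simp) m.1).hasFDerivAt).comp m
      hasFDerivAt_fst
  exact (hasFDerivAt_fst).prodMk (h1.smul hasFDerivAt_snd)

lemma chap_eq {n : ℕ} {f : Vec n → ℝ} (hf : ContDiff ℝ (⊤ : ℕ∞) f) (hf0 : ∀ q, f q ≠ 0)
    (X : Phase n → Phase n) :
    ChapRescale f X = fun z =>
      ((f z.1)⁻¹ • (X (PsiInv f z)).1,
        (X (PsiInv f z)).2
          + (((f z.1)⁻¹ * fderiv ℝ f z.1 ((X (PsiInv f z)).1)) * (f z.1)⁻¹) • z.2) := by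
  funext z
  have h1 : (PsiInv f z).1 = z.1 := rfl
  simp only [ChapRescale]
  rw [(hasFDerivAt_Psi hf (PsiInv f z)).fderiv]
  simp only [ContinuousLinearMap.prod_apply, ContinuousLinearMap.add_apply,
    ContinuousLinearMap.coe_fst', ContinuousLinearMap.smul_apply,
    ContinuousLinearMap.coe_snd', ContinuousLinearMap.smulRight_apply,
    ContinuousLinearMap.coe_comp', Function.comp_apply, h1]
  refine Prod.ext rfl ?_
  show f z.1 • ((f z.1)⁻¹ • X (PsiInv f z)).2
      + (fderiv ℝ f z.1 ((f z.1)⁻¹ • X (PsiInv f z)).1) • (PsiInv f z).2 = _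
  have h2 : (PsiInv f z).2 = (f z.1)⁻¹ • z.2 := rfl
  rw [h2]
  simp only [Prod.smul_snd, Prod.smul_fst, smul_smul, _root_.map_smul, smul_eq_mul]
  rw [mul_inv_cancel₀ (hf0 z.1), one_smul]

end ChapAux

open ChapAux ContinuousLinearMap in
set_option maxHeartbeats 2000000 in
theorem statement0 (n : ℕ) (hn : 1 ≤ n) (X : Phase n → Phase n) (f : Vec n → ℝ)
    (hX : ContDiff ℝ (⊤ : ℕ∞) X) (hf : ContDiff ℝ (⊤ : ℕ∞) f) (hf0 : ∀ q, f q ≠ 0)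
    (hsymp : ∀ (z u v : Phase n),
      Omega (fderiv ℝ (ChapRescale f X) z u) v + Omega u (fderiv ℝ (ChapRescale f X) z v) = 0) :
    ∀ z : Phase n, divergence (fun w => f w.1 ^ (n - 1) • X w) z = 0 := by
  intro w
  classical
  have h1top : ((⊤ : ℕ∞) : WithTop ℕ∞) ≠ 0 := by
    simp
  have hg : f w.1 ≠ 0 := hf0 w.1
  -- abbreviations
  set g : ℝ := f w.1 with hgdef
  set l : Vec n →L[ℝ] ℝ := fderiv ℝ f w.1 with hldef
  set D : Phase n →L[ℝ] Phase n := fderiv ℝ X w with hDdef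
  have hXw : HasFDerivAt X D w := (hX.differentiable h1top w).hasFDerivAt
  set z₀ : Phase n := Psi f w with hz0
  have hinv : PsiInv f z₀ = w := by
    refine Prod.ext rfl ?_
    show (f w.1)⁻¹ • (f w.1 • w.2) = w.2
    rw [smul_smul, inv_mul_cancel₀ hg, one_smul]
  -- basic derivative pieces at z₀
  set Pfst : Phase n →L[ℝ] Vec n := fst ℝ (Vec n) (Vec n) with hPfst
  set Psnd : Phase n →L[ℝ] Vec n := snd ℝ (Vec n) (Vec n) with hPsnd
  have h_c : HasFDerivAt (fun z : Phase n => f z.1) (l.comp Pfst) z₀ :=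
    ((hf.differentiable h1top z₀.1).hasFDerivAt).comp z₀ hasFDerivAt_fst
  set Dcinv : Phase n →L[ℝ] ℝ := (-(g^2)⁻¹) • (l.comp Pfst) with hDcinv
  have h_cinv : HasFDerivAt (fun z : Phase n => (f z.1)⁻¹) Dcinv z₀ :=
    (hasDerivAt_inv hg).comp_hasFDerivAt z₀ h_c
  set Lσ : Phase n →L[ℝ] Phase n :=
    Pfst.prod (g⁻¹ • Psnd + Dcinv.smulRight (g • w.2)) with hLσ
  have hσ : HasFDerivAt (PsiInv f) Lσ z₀ :=
    (hasFDerivAt_fst).prodMk (h_cinv.smul hasFDerivAt_snd)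
  have hXz : HasFDerivAt X D (PsiInv f z₀) := hinv ▸ hXw
  have hXσ : HasFDerivAt (fun z : Phase n => X (PsiInv f z)) (D.comp Lσ) z₀ :=
    hXz.comp z₀ hσ
  set DA : Phase n →L[ℝ] Vec n := Pfst.comp (D.comp Lσ) with hDA
  set DB : Phase n →L[ℝ] Vec n := Psnd.comp (D.comp Lσ) with hDB
  have hA : HasFDerivAt (fun z : Phase n => (X (PsiInv f z)).1) DA z₀ := hXσ.fst
  have hB : HasFDerivAt (fun z : Phase n => (X (PsiInv f z)).2) DB z₀ := hXσ.snd
  -- derivative of z ↦ fderiv f z.1 (as clm-valued map)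
  have hfC1 : ContDiff ℝ ((1:ℕ∞) : WithTop ℕ∞) (fderiv ℝ f) :=
    hf.fderiv_right (WithTop.coe_le_coe.mpr le_top)
  have hfdd : HasFDerivAt (fderiv ℝ f) (fderiv ℝ (fderiv ℝ f) w.1) w.1 :=
    ((hfC1.differentiable (by simp)) w.1).hasFDerivAt
  set Hf : Vec n →L[ℝ] Vec n →L[ℝ] ℝ := fderiv ℝ (fderiv ℝ f) w.1 with hHf
  have hclm : HasFDerivAt (fun z : Phase n => fderiv ℝ f z.1) (Hf.comp Pfst) z₀ :=
    hfdd.comp z₀ hasFDerivAt_fst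
  -- z ↦ fderiv f z.1 ((X (PsiInv f z)).1)
  have happ : HasFDerivAt (fun z : Phase n => fderiv ℝ f z.1 ((X (PsiInv f z)).1))
      (l.comp DA + (Hf.comp Pfst).flip ((X w).1)) z₀ := by
    have h := hclm.clm_apply hA
    rw [hinv] at h
    exact h
  set Dapp : Phase n →L[ℝ] ℝ := l.comp DA + (Hf.comp Pfst).flip ((X w).1) with hDapp
  -- scalar s z = ((f z.1)⁻¹ * app z) * (f z.1)⁻¹
  set Ds1 : Phase n →L[ℝ] ℝ := g⁻¹ • Dapp + (l ((X w).1)) • Dcinv with hDs1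
  have hs1 : HasFDerivAt (fun z : Phase n => (f z.1)⁻¹ * fderiv ℝ f z.1 ((X (PsiInv f z)).1))
      Ds1 z₀ := by
    have h := h_cinv.mul happ
    rw [hinv] at h
    exact h
  set Ds : Phase n →L[ℝ] ℝ := ((g⁻¹ * l ((X w).1)) • Dcinv + g⁻¹ • Ds1) with hDs
  have hs : HasFDerivAt
      (fun z : Phase n => ((f z.1)⁻¹ * fderiv ℝ f z.1 ((X (PsiInv f z)).1)) * (f z.1)⁻¹)
      Ds z₀ := by
    have h := hs1.mul h_cinv
    rw [hinv] at h
    exact h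
  set LB : Phase n →L[ℝ] Phase n :=
    (g⁻¹ • DA + Dcinv.smulRight ((X w).1)).prod
      (DB + (((g⁻¹ * l ((X w).1)) * g⁻¹) • Psnd + Ds.smulRight (g • w.2))) with hLB
  have hF : HasFDerivAt (ChapRescale f X) LB z₀ := by
    rw [chap_eq hf hf0 X]
    refine HasFDerivAt.prodMk ?_ ?_
    · have h := h_cinv.smul hA
      rw [hinv] at h
      exact h
    · have h := hB.add (hs.smul hasFDerivAt_snd)
      rw [hinv] at h
      exact h
  have hDC : fderiv ℝ (ChapRescale f X) z₀ = LB := hF.fderiv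
  -- diagonal identity from the symplectic hypothesis
  have hdiag : ∀ i : Fin n,
      (LB ((Pi.single i 1 : Vec n), 0)).1 i + (LB ((0 : Vec n), (Pi.single i 1 : Vec n))).2 i
        = 0 := by
    intro i
    have h := hsymp z₀ ((Pi.single i 1 : Vec n), 0) ((0 : Vec n), (Pi.single i 1 : Vec n))
    rw [hDC] at h
    simpa [Omega, dotProduct_single, single_dotProduct] using h
  -- linearity helper for D
  have hD1 : ∀ (a : Vec n) (c : ℝ) (v : Vec n), D (a, c • v) = D (a, 0) + c • D (0, v) := by
    intro a c v
    have he : (a, c • v) = ((a, (0:Vec n)) : Phase n) + c • (((0:Vec n), v) : Phase n) := by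
      refine Prod.ext ?_ ?_ <;> simp
    rw [he, map_add, _root_.map_smul]
  have heval1 : ∀ i : Fin n, (LB ((Pi.single i 1 : Vec n), 0)).1 i
      = g⁻¹ * (D ((Pi.single i 1 : Vec n), 0)).1 i
        - (g ^ 2)⁻¹ * l (Pi.single i 1) * (D ((0 : Vec n), w.2)).1 i
        - (g ^ 2)⁻¹ * l (Pi.single i 1) * (X w).1 i := by
    intro i
    simp only [hLB, hDs, hDs1, hDapp, hDB, hDA, hLσ, hDcinv, hPfst, hPsnd,
      ContinuousLinearMap.prod_apply, ContinuousLinearMap.add_apply,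
      ContinuousLinearMap.coe_comp', Function.comp_apply,
      ContinuousLinearMap.smul_apply, ContinuousLinearMap.smulRight_apply,
      ContinuousLinearMap.coe_fst', ContinuousLinearMap.coe_snd',
      ContinuousLinearMap.flip_apply, ContinuousLinearMap.coe_smul',
      Pi.smul_apply, smul_eq_mul, map_zero, smul_zero, zero_add, add_zero,
      Prod.fst_add, Prod.snd_add, Prod.smul_fst, Prod.smul_snd, Pi.add_apply,
      mul_zero, zero_mul, neg_mul, neg_zero, smul_smul, zero_smul]
    rw [hD1]
    simp only [Prod.fst_add, Pi.add_apply, Prod.smul_fst, Pi.smul_apply, smul_eq_mul]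
    field_simp
    ring
  have hD2 : ∀ (c : ℝ) (v : Vec n), D ((0 : Vec n), c • v) = c • D ((0 : Vec n), v) := by
    intro c v
    have he : (((0 : Vec n), c • v) : Phase n) = c • (((0 : Vec n), v) : Phase n) := by
      refine Prod.ext ?_ ?_ <;> simp
    rw [he, _root_.map_smul]
  have heval2 : ∀ i : Fin n, (LB ((0 : Vec n), (Pi.single i 1 : Vec n))).2 i
      = g⁻¹ * (D ((0 : Vec n), Pi.single i 1)).2 i + (g ^ 2)⁻¹ * l ((X w).1)
        + (g ^ 2)⁻¹ * l ((D ((0 : Vec n), Pi.single i 1)).1) * w.2 i := by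
    intro i
    simp only [hLB, hDs, hDs1, hDapp, hDB, hDA, hLσ, hDcinv, hPfst, hPsnd,
      ContinuousLinearMap.prod_apply, ContinuousLinearMap.add_apply,
      ContinuousLinearMap.coe_comp', Function.comp_apply,
      ContinuousLinearMap.smul_apply, ContinuousLinearMap.smulRight_apply,
      ContinuousLinearMap.coe_fst', ContinuousLinearMap.coe_snd',
      ContinuousLinearMap.flip_apply, ContinuousLinearMap.coe_smul',
      ContinuousLinearMap.zero_apply, Pi.single_eq_same,
      Pi.smul_apply, smul_eq_mul, map_zero, smul_zero, zero_add, add_zero,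
      Prod.fst_add, Prod.snd_add, Prod.smul_fst, Prod.smul_snd, Pi.add_apply,
      mul_zero, zero_mul, neg_mul, neg_zero, smul_smul, zero_smul]
    rw [hD2]
    simp only [Prod.snd_add, Prod.fst_add, Pi.add_apply, Prod.smul_fst, Prod.smul_snd,
      Pi.smul_apply, smul_eq_mul, _root_.map_smul]
    field_simp
    ring

  -- abbreviate the diagonal sums of D
  set TA : ℝ := ∑ i : Fin n, (D ((Pi.single i 1 : Vec n), 0)).1 i with hTA
  set TB : ℝ := ∑ i : Fin n, (D ((0 : Vec n), (Pi.single i 1 : Vec n))).2 i with hTB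
  -- dual-pairing resummation identities
  have e1 : ∑ i : Fin n, l (Pi.single i 1) * (D ((0 : Vec n), w.2)).1 i
      = l ((D ((0 : Vec n), w.2)).1) := by
    rw [← clm_sum l ((D ((0 : Vec n), w.2)).1)]
    exact Finset.sum_congr rfl fun i _ => mul_comm _ _
  have e2 : ∑ i : Fin n, l (Pi.single i 1) * (X w).1 i = l ((X w).1) := by
    rw [← clm_sum l ((X w).1)]
    exact Finset.sum_congr rfl fun i _ => mul_comm _ _
  have e3 : ∑ i : Fin n, l ((D ((0 : Vec n), Pi.single i 1)).1) * w.2 i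
      = l ((D ((0 : Vec n), w.2)).1) := by
    have h := clm_sum (l.comp (Pfst.comp (D.comp (inr ℝ (Vec n) (Vec n))))) w.2
    simp only [ContinuousLinearMap.coe_comp', Function.comp_apply,
      ContinuousLinearMap.inr_apply, hPfst, ContinuousLinearMap.coe_fst'] at h
    rw [← h]
    exact Finset.sum_congr rfl fun i _ => mul_comm _ _
  -- the trace of the rescaled field vanishes; deduce the key relation
  have hsum0 : ∑ i : Fin n,
      ((LB ((Pi.single i 1 : Vec n), 0)).1 i + (LB ((0 : Vec n), (Pi.single i 1 : Vec n))).2 i)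
      = 0 := Finset.sum_eq_zero fun i _ => hdiag i
  simp_rw [heval1, heval2] at hsum0
  simp only [Finset.sum_add_distrib, Finset.sum_sub_distrib, mul_assoc] at hsum0
  simp only [← Finset.mul_sum, Finset.sum_const, Finset.card_univ, Fintype.card_fin,
    nsmul_eq_mul] at hsum0
  simp only [← mul_assoc] at hsum0
  rw [e1, e2, e3] at hsum0
  rw [← hTA, ← hTB] at hsum0
  -- divergence of the weighted field
  have h_cw : HasFDerivAt (fun z : Phase n => f z.1) (l.comp Pfst) w :=
    ((hf.differentiable h1top w.1).hasFDerivAt).comp w hasFDerivAt_fst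
  have hpow : HasFDerivAt (fun z : Phase n => f z.1 ^ (n-1))
      ((((n-1 : ℕ):ℝ) * g ^ (n-1-1)) • (l.comp Pfst)) w :=
    (hasDerivAt_pow (n-1) g).comp_hasFDerivAt w h_cw
  have hH : HasFDerivAt (fun z : Phase n => f z.1 ^ (n-1) • X z)
      (g ^ (n-1) • D + ((((n-1:ℕ):ℝ) * g ^ (n-1-1)) • (l.comp Pfst)).smulRight (X w)) w :=
    hpow.smul hXw
  simp only [divergence]
  rw [hH.fderiv, trace_eq_sum]
  simp only [ContinuousLinearMap.add_apply, ContinuousLinearMap.smul_apply,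
    ContinuousLinearMap.smulRight_apply, ContinuousLinearMap.coe_comp',
    Function.comp_apply, hPfst, ContinuousLinearMap.coe_fst',
    ContinuousLinearMap.coe_smul', Pi.smul_apply, smul_eq_mul, map_zero,
    zero_mul, mul_zero, zero_smul, add_zero, smul_zero,
    Prod.fst_add, Prod.snd_add, Prod.smul_fst, Prod.smul_snd, Pi.add_apply]
  rw [Finset.sum_add_distrib]
  simp only [mul_assoc]
  simp only [← Finset.mul_sum]
  rw [e2, ← hTA, ← hTB]
  obtain ⟨k, rfl⟩ : ∃ k, n = k + 1 := ⟨n - 1, (Nat.succ_pred_eq_of_pos hn).symm⟩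
  simp only [Nat.add_sub_cancel] at hsum0 ⊢
  rcases Nat.eq_zero_or_pos k with hk | hk
  · subst hk
    simp only [pow_zero, one_mul, Nat.cast_zero, zero_mul, add_zero, Nat.cast_one] at hsum0 ⊢
    field_simp at hsum0
    have h4 : g ^ 4 * (TA + TB) = 0 := by linear_combination g ^ 3 * hsum0
    exact (mul_eq_zero.mp h4).resolve_left (pow_ne_zero 4 hg)
  · obtain ⟨j, rfl⟩ : ∃ j, k = j + 1 := ⟨k - 1, (Nat.succ_pred_eq_of_pos hk).symm⟩
    simp only [Nat.add_sub_cancel] at hsum0 ⊢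
    field_simp at hsum0
    have h4 : g ^ 3 * (g ^ (j + 1) * TA + ((j : ℝ) + 1) * (g ^ j * l ((X w).1))
        + g ^ (j + 1) * TB) = 0 := by push_cast at hsum0; linear_combination g ^ (j + 3) * hsum0
    have := (mul_eq_zero.mp h4).resolve_left (pow_ne_zero 3 hg)
    push_cast
    linarith
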